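/- Let G be a finite, simple, connected graph, let T1 and T2 be disjoint subsets of V(G) with T1 ∪ T2 nonempty, and let φ be a cheapest (T1,T2)-extension of G. Then every good component of φ contains at least one vertex of T1 ∪ T2. -/

import Mathlib

open scoped Classical

variable {V : Type*}

/-- The spanning subgraph of `G` whose edges are the *bad* edges w.r.t. the
2-coloring `φ` (edges whose endpoints get the same color). -/
def badGraph (G : SimpleGraph V) (φ : V → Fin 2) : SimpleGraph V where
  Adj u v := G.Adj u v ∧ φ u = φ v
  symm := ⟨fun u v h => ⟨h.1.symm, h.2.symm⟩⟩
  loopless := ⟨fun v h => G.loopless.irrefl v h.1⟩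

/-- The spanning subgraph of `G` whose edges are the *good* edges w.r.t. the
2-coloring `φ` (edges whose endpoints get different colors). -/
def goodGraph (G : SimpleGraph V) (φ : V → Fin 2) : SimpleGraph V where
  Adj u v := G.Adj u v ∧ φ u ≠ φ v
  symm := ⟨fun u v h => ⟨h.1.symm, Ne.symm h.2⟩⟩
  loopless := ⟨fun v h => G.loopless.irrefl v h.1⟩

/-- `X` is a monochromatic component of the 2-coloring `φ` of `G`: the vertex set of a
connected component of the subgraph of `G` induced by one of the two color classes. -/
def IsMonochromaticComponent (G : SimpleGraph V) (φ : V → Fin 2) (X : Set V) : Prop :=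
  ∃ (i : Fin 2) (c : (SimpleGraph.induce (φ ⁻¹' {i}) G).ConnectedComponent),
    X = Subtype.val '' c.supp

/-- `X` is a good component of the 2-coloring `φ` of `G`: the vertex set of a connected
component of the spanning subgraph of `G` consisting of the good edges. -/
def IsGoodComponent (G : SimpleGraph V) (φ : V → Fin 2) (X : Set V) : Prop :=
  ∃ c : (goodGraph G φ).ConnectedComponent, X = c.supp

/-- The cost of a 2-coloring `φ` of `G`: the sum, over all monochromatic components `X`
of `φ`, of `|X| - 1`. -/
noncomputable def cost (G : SimpleGraph V) (φ : V → Fin 2) : ℕ :=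
  ∑ᶠ X ∈ {X : Set V | IsMonochromaticComponent G φ X}, (Nat.card X - 1)

/-- A 2-coloring is a `(T₁,T₂)`-extension if it colors every vertex of `T₁` with the first
color and every vertex of `T₂` with the second color. -/
def IsExtension (φ : V → Fin 2) (T1 T2 : Set V) : Prop :=
  (∀ x ∈ T1, φ x = 0) ∧ (∀ x ∈ T2, φ x = 1)

/-- A cheapest `(T₁,T₂)`-extension of `G`: no `(T₁,T₂)`-extension has strictly smaller cost. -/
noncomputable def IsCheapestExtension (G : SimpleGraph V) (φ : V → Fin 2)
    (T1 T2 : Set V) : Prop :=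
  IsExtension φ T1 T2 ∧ ∀ ψ : V → Fin 2, IsExtension ψ T1 T2 → cost G φ ≤ cost G ψ

/-- `X` is `p`-connected in `G`: `|X| ≥ p` and for all subsets `X₁, X₂ ⊆ X` with
`|X₁| = |X₂| ≤ p` there are `|X₁|` pairwise vertex-disjoint paths in `G`, each with one
endpoint in `X₁` and the other endpoint in `X₂`. -/
def PConnected (G : SimpleGraph V) (p : ℕ) (X : Set V) : Prop :=
  p ≤ Nat.card X ∧
  ∀ X1 X2 : Finset V, ↑X1 ⊆ X → ↑X2 ⊆ X → X1.card = X2.card → X1.card ≤ p →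
    ∃ (a b : Fin X1.card → V) (w : ∀ i, G.Walk (a i) (b i)),
      (∀ i, (w i).IsPath) ∧ (∀ i, a i ∈ X1) ∧ (∀ i, b i ∈ X2) ∧
      ∀ i j, i ≠ j → ∀ x, x ∈ (w i).support → x ∉ (w j).support

/-- `X` is well-connected in `G` if it is `(|X|/2)`-connected. -/
def WellConnected (G : SimpleGraph V) (X : Set V) : Prop :=
  PConnected G (Nat.card X / 2) X

/-- `d_G(X)`: the number of edges of `G` with exactly one endpoint in `X`. -/
noncomputable def cutCard (G : SimpleGraph V) (X : Set V) : ℕ :=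
  Nat.card {e : Sym2 V | e ∈ G.edgeSet ∧ ∃ a b, e = s(a, b) ∧ a ∈ X ∧ b ∉ X}

/-- `X` is an `(x,y)`-important set in `G`. -/
noncomputable def ImportantSet (G : SimpleGraph V) (x y : V) (X : Set V) : Prop :=
  x ∈ X ∧ y ∉ X ∧ (SimpleGraph.induce X G).Connected ∧
  ¬ ∃ X' : Set V, X ⊂ X' ∧ y ∉ X' ∧ (SimpleGraph.induce X' G).Connected ∧
      cutCard G X' ≤ cutCard G X

/-- `G` has a tree decomposition of width at most `w`. -/
def HasTreewidthAtMost (G : SimpleGraph V) (w : ℕ) : Prop :=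
  ∃ (n : ℕ) (T : SimpleGraph (Fin n)) (bag : Fin n → Finset V),
    T.IsTree ∧
    (∀ v : V, ∃ i, v ∈ bag i) ∧
    (∀ u v : V, G.Adj u v → ∃ i, u ∈ bag i ∧ v ∈ bag i) ∧
    (∀ v : V, (SimpleGraph.induce {i | v ∈ bag i} T).Connected) ∧
    (∀ i, (bag i).card ≤ w + 1)

/-- The treewidth of `G`: the minimum width over all tree decompositions of `G`. -/
noncomputable def treewidth (G : SimpleGraph V) : ℕ :=
  sInf {w | HasTreewidthAtMost G w}

/-- The graph `G/S` obtained from `G` by contracting the edges of `S`: its vertices are the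
connected components of the graph `(V(G), S)`, two distinct components being adjacent iff
`G` has an edge with one endpoint in each of them. -/
def contractEdges (G : SimpleGraph V) (S : Set (Sym2 V)) :
    SimpleGraph (SimpleGraph.fromEdgeSet S).ConnectedComponent where
  Adj c d := c ≠ d ∧ ∃ u v : V, G.Adj u v ∧
      (SimpleGraph.fromEdgeSet S).connectedComponentMk u = c ∧
      (SimpleGraph.fromEdgeSet S).connectedComponentMk v = d
  symm := by
    constructor
    rintro c d ⟨hcd, u, v, ha, hu, hv⟩
    exact ⟨hcd.symm, v, u, ha.symm, hv, hu⟩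
  loopless := ⟨fun c h => h.1 rfl⟩

/-- The graph `G*` obtained from `G` by adding a new vertex (here `none`) adjacent to
exactly the vertices of `Y`. -/
def addApex (G : SimpleGraph V) (Y : Set V) : SimpleGraph (Option V) :=
  SimpleGraph.fromRel (fun a b =>
    (∃ u v : V, a = some u ∧ b = some v ∧ G.Adj u v) ∨
    (∃ u : V, a = some u ∧ b = none ∧ u ∈ Y))

/-- The set `Z`: the union, over all `x ∈ T`, of all `(x, y*)`-important sets `X` in
`G* = addApex G Y` with `d_{G*}(X) ≤ p`. -/
noncomputable def importantUnion (G : SimpleGraph V) (Y : Set V) (T : Set V) (p : ℕ) :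
    Set (Option V) :=
  {w | ∃ x ∈ T, ∃ X : Set (Option V),
    ImportantSet (addApex G Y) (some x) none X ∧ cutCard (addApex G Y) X ≤ p ∧ w ∈ X}

section Stmt6Aux

open SimpleGraph

lemma bad_reach_color {G : SimpleGraph V} {φ : V → Fin 2} {u v : V}
    (h : (badGraph G φ).Reachable u v) : φ u = φ v := by
  obtain ⟨w⟩ := h
  induction w with
  | nil => rfl
  | cons h _ ih => exact h.2.trans ih

/-- A homomorphism from the induced subgraph on a color class to the bad graph. -/
def indToBad (G : SimpleGraph V) (φ : V → Fin 2) (i : Fin 2) :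
    SimpleGraph.induce (φ ⁻¹' {i}) G →g badGraph G φ where
  toFun := Subtype.val
  map_rel' := by
    rintro ⟨a, ha⟩ ⟨b, hb⟩ h
    simp only [Set.mem_preimage, Set.mem_singleton_iff] at ha hb
    exact ⟨h, ha.trans hb.symm⟩

lemma bad_walk_lift {G : SimpleGraph V} {φ : V → Fin 2} {i : Fin 2} :
    ∀ {u v : V} (_ : (badGraph G φ).Walk u v) (hu : u ∈ φ ⁻¹' {i}) (hv : v ∈ φ ⁻¹' {i}),
      (SimpleGraph.induce (φ ⁻¹' {i}) G).Reachable ⟨u, hu⟩ ⟨v, hv⟩ := by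
  intro u v w
  induction w with
  | nil => intro hu hv; rfl
  | @cons u b v h p ih =>
    intro hu hv
    have hb : b ∈ φ ⁻¹' {i} := by
      simp only [Set.mem_preimage, Set.mem_singleton_iff] at hu ⊢
      exact h.2.symm.trans hu
    exact (show (SimpleGraph.induce (φ ⁻¹' {i}) G).Adj ⟨u, hu⟩ ⟨b, hb⟩ from h.1).reachable.trans
      (ih hb hv)

lemma supp_eq_bad {G : SimpleGraph V} {φ : V → Fin 2} {i : Fin 2} (u₀ : V)
    (hu : u₀ ∈ φ ⁻¹' {i}) :
    Subtype.val '' ((SimpleGraph.induce (φ ⁻¹' {i}) G).connectedComponentMk ⟨u₀, hu⟩).supp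
      = ((badGraph G φ).connectedComponentMk u₀).supp := by
  ext x
  simp only [Set.mem_image, ConnectedComponent.mem_supp_iff, ConnectedComponent.eq]
  constructor
  · rintro ⟨⟨y, hy⟩, hr, rfl⟩
    exact hr.map (indToBad G φ i)
  · intro hr
    have hx : x ∈ φ ⁻¹' {i} := by
      simp only [Set.mem_preimage, Set.mem_singleton_iff] at hu ⊢
      exact (bad_reach_color hr).trans hu
    exact ⟨⟨x, hx⟩, bad_walk_lift hr.some hx hu, rfl⟩

lemma mono_iff_bad {G : SimpleGraph V} {φ : V → Fin 2} {X : Set V} :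
    IsMonochromaticComponent G φ X ↔
      ∃ c : (badGraph G φ).ConnectedComponent, X = c.supp := by
  constructor
  · rintro ⟨i, c, rfl⟩
    obtain ⟨⟨u₀, hu₀⟩, rfl⟩ := c.exists_rep
    exact ⟨_, supp_eq_bad u₀ hu₀⟩
  · rintro ⟨c, rfl⟩
    obtain ⟨u₀, rfl⟩ := c.exists_rep
    exact ⟨φ u₀, _, (supp_eq_bad u₀ rfl).symm⟩

lemma cost_add_card (G : SimpleGraph V) [Fintype V] (φ : V → Fin 2) :
    cost G φ + Nat.card ((badGraph G φ).ConnectedComponent) = Fintype.card V := by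
  classical
  have fc : Fintype ((badGraph G φ).ConnectedComponent) := Fintype.ofFinite _
  have hset : {X : Set V | IsMonochromaticComponent G φ X}
      = Set.range (fun c : (badGraph G φ).ConnectedComponent => c.supp) := by
    ext X
    simp only [Set.mem_setOf_eq, Set.mem_range, mono_iff_bad, eq_comm]
  have hcost : cost G φ = ∑ c : (badGraph G φ).ConnectedComponent,
      (Nat.card c.supp - 1) := by
    rw [cost, hset, finsum_mem_range ConnectedComponent.supp_injective,
      finsum_eq_sum_of_fintype]
  have hcards : ∀ c : (badGraph G φ).ConnectedComponent,
      Nat.card c.supp = Fintype.card {v : V // (badGraph G φ).connectedComponentMk v = c} := by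
    intro c
    rw [Nat.card_eq_fintype_card]
    exact Fintype.card_congr (Equiv.refl _)
  have hpos : ∀ c : (badGraph G φ).ConnectedComponent, 1 ≤ Nat.card c.supp := by
    intro c
    obtain ⟨v, hv⟩ := c.exists_rep
    have hmem : v ∈ c.supp := hv
    have : Nonempty c.supp := ⟨⟨v, hmem⟩⟩
    exact Nat.card_pos
  have hsum : ∑ c : (badGraph G φ).ConnectedComponent, Nat.card c.supp = Fintype.card V := by
    rw [Fintype.card_congr (Equiv.sigmaFiberEquiv (badGraph G φ).connectedComponentMk).symm,
      Fintype.card_sigma]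
    exact Finset.sum_congr rfl fun c _ => hcards c
  rw [hcost, Nat.card_eq_fintype_card, ← hsum, ← Finset.card_univ, Finset.card_eq_sum_ones,
    ← Finset.sum_add_distrib]
  exact Finset.sum_congr rfl fun c _ => Nat.sub_add_cancel (hpos c)

end Stmt6Aux

/-- if `G` is connected, `T₁`, `T₂` are disjoint with `T₁ ∪ T₂` nonempty, and
`φ` is a cheapest `(T₁,T₂)`-extension of `G`, then every good component of `φ` contains a
vertex of `T₁ ∪ T₂`. -/
theorem stmt6 {V : Type*} [Fintype V] (G : SimpleGraph V) (hconn : G.Connected)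
    (T1 T2 : Set V) (hdisj : Disjoint T1 T2) (hne : (T1 ∪ T2).Nonempty)
    (φ : V → Fin 2) (hcheap : IsCheapestExtension G φ T1 T2) :
    ∀ X : Set V, IsGoodComponent G φ X → ∃ x ∈ T1 ∪ T2, x ∈ X := by
  classical
  intro X hX
  by_contra hcon
  push_neg at hcon
  obtain ⟨c, rfl⟩ := hX
  -- membership in the good component is closed under good edges
  have hclosed : ∀ {p q : V}, p ∈ c.supp → (goodGraph G φ).Adj p q → q ∈ c.supp := by
    intro p q hp hadj
    rw [SimpleGraph.ConnectedComponent.mem_supp_iff] at hp ⊢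
    rw [← hp]
    exact SimpleGraph.ConnectedComponent.sound hadj.symm.reachable
  -- find a boundary edge
  obtain ⟨t, ht⟩ := hne
  have htX : t ∉ c.supp := hcon t ht
  obtain ⟨u₀, hu₀⟩ := c.exists_rep
  have hu₀X : u₀ ∈ c.supp := hu₀
  obtain ⟨w⟩ := hconn.preconnected u₀ t
  obtain ⟨d, _, hd1, hd2⟩ := w.exists_boundary_dart c.supp hu₀X htX
  have hab : G.Adj d.fst d.snd := d.adj
  have hfab : φ d.fst = φ d.snd := by
    by_contra hne'
    exact hd2 (hclosed hd1 ⟨hab, hne'⟩)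
  -- flip the colors on the good component
  set ψ : V → Fin 2 := fun w => if w ∈ c.supp then φ w + 1 else φ w with hψdef
  have hψin : ∀ {p : V}, p ∈ c.supp → ψ p = φ p + 1 := by
    intro p hp; simp only [hψdef, if_pos hp]
  have hψout : ∀ {p : V}, p ∉ c.supp → ψ p = φ p := by
    intro p hp; simp only [hψdef, if_neg hp]
  have haddne : ∀ i : Fin 2, i + 1 ≠ i := by decide
  have hext : IsExtension ψ T1 T2 := by
    constructor
    · intro x hx
      rw [hψout (hcon x (Or.inl hx))]
      exact hcheap.1.1 x hx
    · intro x hx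
      rw [hψout (hcon x (Or.inr hx))]
      exact hcheap.1.2 x hx
  -- key property of bad edges of ψ
  have key : ∀ {p q : V}, (badGraph G ψ).Adj p q →
      (badGraph G φ).Adj p q ∧ (p ∈ c.supp ↔ q ∈ c.supp) := by
    intro p q hpq
    obtain ⟨hadj, heq⟩ := hpq
    by_cases hp : p ∈ c.supp <;> by_cases hq : q ∈ c.supp
    · rw [hψin hp, hψin hq] at heq
      exact ⟨⟨hadj, add_right_cancel heq⟩, by simp [hp, hq]⟩
    · rw [hψin hp, hψout hq] at heq
      have hne' : φ p ≠ φ q := by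
        intro h'; rw [h'] at heq; exact haddne (φ q) heq
      exact absurd (hclosed hp ⟨hadj, hne'⟩) hq
    · rw [hψout hp, hψin hq] at heq
      have hne' : φ p ≠ φ q := by
        intro h'; rw [h'] at heq; exact haddne (φ q) heq.symm
      exact absurd (hclosed hq ⟨hadj.symm, hne'.symm⟩) hp
    · rw [hψout hp, hψout hq] at heq
      exact ⟨⟨hadj, heq⟩, by simp [hp, hq]⟩
  have hle : badGraph G ψ ≤ badGraph G φ := fun p q h => (key h).1
  -- membership is invariant along bad walks of ψ
  have hinv : ∀ {p q : V}, (badGraph G ψ).Reachable p q → (p ∈ c.supp ↔ q ∈ c.supp) := by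
    intro p q h
    obtain ⟨w'⟩ := h
    induction w' with
    | nil => rfl
    | cons h _ ih => exact (key h).2.trans ih
  -- the component map
  set f : (badGraph G ψ).ConnectedComponent → (badGraph G φ).ConnectedComponent :=
    SimpleGraph.ConnectedComponent.map (SimpleGraph.Hom.ofLE hle) with hfdef
  have hfmk : ∀ v : V, f ((badGraph G ψ).connectedComponentMk v)
      = (badGraph G φ).connectedComponentMk v := fun v => rfl
  have hsurj : Function.Surjective f := by
    intro cc
    obtain ⟨v, hv⟩ := cc.exists_rep
    exact ⟨(badGraph G ψ).connectedComponentMk v, (hfmk v).trans hv⟩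
  have hninj : ¬ Function.Injective f := by
    intro hinj
    have h1 : f ((badGraph G ψ).connectedComponentMk d.fst)
        = f ((badGraph G ψ).connectedComponentMk d.snd) := by
      rw [hfmk, hfmk]
      exact SimpleGraph.ConnectedComponent.sound (SimpleGraph.Adj.reachable ⟨hab, hfab⟩)
    have h2 := hinj h1
    have h3 : (badGraph G ψ).Reachable d.fst d.snd :=
      (SimpleGraph.ConnectedComponent.eq).1 h2
    exact hd2 ((hinv h3).1 hd1)
  -- strict card inequality of components
  have fψ : Fintype ((badGraph G ψ).ConnectedComponent) := Fintype.ofFinite _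
  have fφ : Fintype ((badGraph G φ).ConnectedComponent) := Fintype.ofFinite _
  have hcardlt : Nat.card ((badGraph G φ).ConnectedComponent)
      < Nat.card ((badGraph G ψ).ConnectedComponent) := by
    rw [Nat.card_eq_fintype_card, Nat.card_eq_fintype_card]
    exact Fintype.card_lt_of_surjective_not_injective f hsurj hninj
  -- conclude via the cost formula
  have hφ := cost_add_card G φ
  have hψ := cost_add_card G ψ
  have hlt : cost G ψ < cost G φ := by omega
  exact absurd (hcheap.2 ψ hext) (by omega)
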